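/- The set of {+,-}-sequences of length n with an even number of minus signs is in bijection with the set of Young diagrams fitting inside an n×n square that are symmetric with respect to the main diagonal and have an even number of boxes on the main diagonal. -/

import Mathlib

namespace TypeD

section
variable (n : ℕ) (α : Fin n → Bool)

/-- `α` lifted to `ℕ` -/
def aFun (i : ℕ) : Bool := if h : i < n then α ⟨i, h⟩ else false

/-- step `t` (`0 ≤ t < 2n`) of the boundary path of the symmetric diagram:
`true` = down.  The first `n` steps read `α` from right to left, the remaining
steps are the mirror image. -/
def stepD (t : ℕ) : Bool :=
  if t < n then aFun n α (n - 1 - t) else if t < 2 * n then !aFun n α (t - n) else false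

/-- number of down steps before time `t` -/
def cnt (t : ℕ) : ℕ := ((Finset.range t).filter fun u => stepD n α u = true).card

/-- number of left steps at time `≥ t` -/
def lcnt (t : ℕ) : ℕ :=
  ((Finset.range (2 * n)).filter fun u => t ≤ u ∧ stepD n α u = false).card

/-- row `r` of the diagram: lefts occurring after the `(r+1)`-st down step -/
def lam (r : ℕ) : ℕ :=
  ((Finset.range (2 * n)).filter fun t => stepD n α t = false ∧ r < cnt n α t).card

def K (j : ℕ) : ℕ :=
  ((Finset.range (2 * n)).filter fun t => stepD n α t = true ∧ j < lcnt n α (t + 1)).card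

lemma stepD_mirror {t : ℕ} (ht : t < 2 * n) :
    stepD n α (2 * n - 1 - t) = !(stepD n α t) := by
  unfold stepD
  rcases lt_or_ge t n with h | h
  · have h1 : ¬ (2 * n - 1 - t < n) := by omega
    have h2 : 2 * n - 1 - t < 2 * n := by omega
    simp only [if_pos h, if_neg h1, if_pos h2]
    have : 2 * n - 1 - t - n = n - 1 - t := by omega
    rw [this]
  · have h1 : 2 * n - 1 - t < n := by omega
    simp only [if_pos h1, if_neg (by omega : ¬ t < n), if_pos ht]
    have : n - 1 - (2 * n - 1 - t) = t - n := by omega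
    rw [this, Bool.not_not]

lemma filter_mirror_card (p q : ℕ → Prop) [DecidablePred p] [DecidablePred q]
    (h : ∀ t < 2 * n, (p t ↔ q (2 * n - 1 - t))) :
    ((Finset.range (2 * n)).filter p).card = ((Finset.range (2 * n)).filter q).card := by
  apply Finset.card_nbij' (fun t => 2 * n - 1 - t) (fun t => 2 * n - 1 - t)
  · intro a ha
    simp only [Finset.mem_coe, Finset.mem_filter, Finset.mem_range] at ha ⊢
    exact ⟨by omega, (h a ha.1).mp ha.2⟩
  · intro a ha
    simp only [Finset.mem_coe, Finset.mem_filter, Finset.mem_range] at ha ⊢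
    refine ⟨by omega, ?_⟩
    have := h (2 * n - 1 - a) (by omega)
    rw [(by omega : 2 * n - 1 - (2 * n - 1 - a) = a)] at this
    exact this.mpr ha.2
  · intro a ha; simp only [Finset.mem_coe, Finset.mem_filter, Finset.mem_range] at ha ⊢; omega
  · intro a ha; simp only [Finset.mem_coe, Finset.mem_filter, Finset.mem_range] at ha ⊢; omega

lemma downs_eq_lefts :
    cnt n α (2 * n) = ((Finset.range (2 * n)).filter fun u => stepD n α u = false).card := by
  unfold cnt
  apply filter_mirror_card
  intro t ht
  rw [stepD_mirror n α ht]
  simp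

lemma cnt_total : cnt n α (2 * n) = n := by
  have h2 := Finset.card_filter_add_card_filter_not
    (s := Finset.range (2 * n)) (p := fun u => stepD n α u = true)
  simp only [Finset.card_range] at h2
  have h3 : ((Finset.range (2 * n)).filter fun u => ¬ stepD n α u = true).card
      = ((Finset.range (2 * n)).filter fun u => stepD n α u = false).card := by
    congr 1; apply Finset.filter_congr; intro x _; simp
  have := downs_eq_lefts n α
  unfold cnt at *
  omega

lemma lefts_total :
    ((Finset.range (2 * n)).filter fun u => stepD n α u = false).card = n := by
  rw [← downs_eq_lefts, cnt_total]


lemma lcnt_eq_cnt {T : ℕ} (hT : T ≤ 2 * n) : lcnt n α T = cnt n α (2 * n - T) := by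
  unfold lcnt cnt
  apply Finset.card_nbij' (fun t => 2 * n - 1 - t) (fun t => 2 * n - 1 - t)
  · intro a ha
    simp only [Finset.mem_coe, Finset.mem_filter, Finset.mem_range] at ha ⊢
    refine ⟨by omega, ?_⟩
    rw [stepD_mirror n α (by omega : a < 2 * n), ha.2.2]
    rfl
  · intro a ha
    simp only [Finset.mem_coe, Finset.mem_filter, Finset.mem_range] at ha ⊢
    have h2 : a < 2 * n := by omega
    refine ⟨by omega, by omega, ?_⟩
    rw [stepD_mirror n α h2, ha.2]
    rfl
  · intro a ha; simp only [Finset.mem_coe, Finset.mem_filter, Finset.mem_range] at ha ⊢; omega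
  · intro a ha; simp only [Finset.mem_coe, Finset.mem_filter, Finset.mem_range] at ha ⊢; omega

lemma cnt_mono : Monotone (cnt n α) := by
  intro a b hab
  exact Finset.card_le_card (Finset.filter_subset_filter _ (Finset.range_subset_range.2 hab))

lemma lcnt_anti {a b : ℕ} (hab : a ≤ b) : lcnt n α b ≤ lcnt n α a := by
  apply Finset.card_le_card
  apply Finset.monotone_filter_right
  intro x _ h
  exact ⟨le_trans hab h.1, h.2⟩

lemma cnt_le {t : ℕ} (ht : t ≤ 2 * n) : cnt n α t ≤ n := by
  calc cnt n α t ≤ cnt n α (2 * n) := cnt_mono n α ht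
  _ = n := cnt_total n α

lemma cnt_succ_of_down {t : ℕ} (hd : stepD n α t = true) :
    cnt n α (t + 1) = cnt n α t + 1 := by
  unfold cnt
  rw [Finset.range_add_one, Finset.filter_insert, if_pos hd,
    Finset.card_insert_of_notMem (by simp [Finset.mem_filter])]

lemma cnt_lt_of_down {t : ℕ} (ht : t < 2 * n) (hd : stepD n α t = true) :
    cnt n α t < n := by
  have h1 : cnt n α (t + 1) ≤ n := cnt_le n α (by omega)
  have := cnt_succ_of_down n α hd
  omega

lemma lam_le (r : ℕ) : lam n α r ≤ n := by
  have h : lam n α r ≤ ((Finset.range (2 * n)).filter fun u => stepD n α u = false).card := by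
    apply Finset.card_le_card
    apply Finset.monotone_filter_right
    intro x _ h
    exact h.1
  rw [lefts_total n α] at h
  exact h

lemma lam_anti {a b : ℕ} (hab : a ≤ b) : lam n α b ≤ lam n α a := by
  apply Finset.card_le_card
  apply Finset.monotone_filter_right
  intro x _ h
  exact ⟨h.1, lt_of_le_of_lt hab h.2⟩


lemma char_lam (i j : ℕ) :
    j < lam n α i ↔ ∃ T ≤ 2 * n, i < cnt n α T ∧ j < lcnt n α T := by
  constructor
  · intro h
    set F := (Finset.range (2 * n)).filter fun t => stepD n α t = false ∧ i < cnt n α t with hF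
    have hFcard : lam n α i = F.card := rfl
    have hne : F.Nonempty := Finset.card_pos.mp (by omega)
    set T := F.min' hne with hT
    have hmemT : T ∈ F := F.min'_mem hne
    simp only [hF, Finset.mem_filter, Finset.mem_range] at hmemT
    refine ⟨T, by omega, hmemT.2.2, ?_⟩
    have hsub : F ⊆ (Finset.range (2 * n)).filter fun u => T ≤ u ∧ stepD n α u = false := by
      intro x hx
      have hxmin := F.min'_le x hx
      simp only [hF, Finset.mem_filter, Finset.mem_range] at hx
      simp only [Finset.mem_filter, Finset.mem_range]
      exact ⟨hx.1, hxmin, hx.2.1⟩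
    have h2 := Finset.card_le_card hsub
    have h3 : lcnt n α T = ((Finset.range (2 * n)).filter
        fun u => T ≤ u ∧ stepD n α u = false).card := rfl
    omega
  · rintro ⟨T, hT, hc, hl⟩
    have hsub : ((Finset.range (2 * n)).filter fun u => T ≤ u ∧ stepD n α u = false) ⊆
        (Finset.range (2 * n)).filter fun t => stepD n α t = false ∧ i < cnt n α t := by
      apply Finset.monotone_filter_right
      intro x _ hx
      exact ⟨hx.2, lt_of_lt_of_le hc (cnt_mono n α hx.1)⟩
    have h2 := Finset.card_le_card hsub
    have h3 : lcnt n α T = ((Finset.range (2 * n)).filter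
        fun u => T ≤ u ∧ stepD n α u = false).card := rfl
    have h4 : lam n α i = ((Finset.range (2 * n)).filter
        fun t => stepD n α t = false ∧ i < cnt n α t).card := rfl
    omega

lemma char_K (i j : ℕ) :
    i < K n α j ↔ ∃ T ≤ 2 * n, i < cnt n α T ∧ j < lcnt n α T := by
  constructor
  · intro h
    set G := (Finset.range (2 * n)).filter
      (fun t => stepD n α t = true ∧ j < lcnt n α (t + 1)) with hG
    have hGcard : K n α j = G.card := rfl
    have hne : G.Nonempty := Finset.card_pos.mp (by omega)
    set M := G.max' hne with hM
    have hmemT : M ∈ G := G.max'_mem hne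
    have hfacts := hmemT
    simp only [hG, Finset.mem_filter, Finset.mem_range] at hfacts
    set T := M + 1 with hT
    refine ⟨T, by omega, ?_, hfacts.2.2⟩
    have hsub : G ⊆ (Finset.range T).filter fun u => stepD n α u = true := by
      intro x hx
      have hxmax : x ≤ M := G.le_max' x hx
      simp only [hG, Finset.mem_filter, Finset.mem_range] at hx
      simp only [Finset.mem_filter, Finset.mem_range]
      exact ⟨by omega, hx.2.1⟩
    have h2 := Finset.card_le_card hsub
    have h3 : cnt n α T = ((Finset.range T).filter fun u => stepD n α u = true).card := rfl
    omega
  · rintro ⟨T, hT, hc, hl⟩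
    have hsub : ((Finset.range T).filter fun u => stepD n α u = true) ⊆
        (Finset.range (2 * n)).filter
          (fun t => stepD n α t = true ∧ j < lcnt n α (t + 1)) := by
      intro x hx
      simp only [Finset.mem_filter, Finset.mem_range] at hx ⊢
      refine ⟨by omega, hx.2, lt_of_lt_of_le hl (lcnt_anti n α (by omega))⟩
    have h2 := Finset.card_le_card hsub
    have h3 : cnt n α T = ((Finset.range T).filter fun u => stepD n α u = true).card := rfl
    have h4 : K n α j = ((Finset.range (2 * n)).filter
        fun t => stepD n α t = true ∧ j < lcnt n α (t + 1)).card := rfl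
    omega

lemma K_eq_lam (j : ℕ) : K n α j = lam n α j := by
  unfold K lam
  apply filter_mirror_card
  intro t ht
  have h1 : stepD n α (2 * n - 1 - t) = !(stepD n α t) := stepD_mirror n α ht
  have h2 : cnt n α (2 * n - 1 - t) = lcnt n α (t + 1) := by
    rw [lcnt_eq_cnt n α (by omega : t + 1 ≤ 2 * n)]
    congr 1
    omega
  rw [h1, h2]
  constructor
  · rintro ⟨hd, hj⟩; exact ⟨by rw [hd]; rfl, hj⟩
  · rintro ⟨hd, hj⟩
    refine ⟨?_, hj⟩
    cases h : stepD n α t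
    · rw [h] at hd; simp at hd
    · rfl

lemma K_le (j : ℕ) : K n α j ≤ n := by
  have h : K n α j ≤ cnt n α (2 * n) := by
    apply Finset.card_le_card
    apply Finset.monotone_filter_right
    intro x _ h
    exact h.1
  rw [cnt_total] at h
  exact h



/-- cardinality of `{i : Fin n | i < k}` -/
lemma card_fin_lt (k : ℕ) (hk : k ≤ n) :
    (Finset.univ.filter fun i : Fin n => i.val < k).card = k := by
  have : (Finset.univ.filter fun i : Fin n => i.val < k).card
      = ((Finset.range n).filter fun t => t < k).card := by
    apply Finset.card_nbij (fun i => i.val)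
    · intro a ha
      simp only [Finset.mem_coe, Finset.mem_filter, Finset.mem_range, Finset.mem_univ, true_and] at ha ⊢
      exact ⟨a.isLt, ha⟩
    · intro a ha b hb hab
      exact Fin.ext hab
    · intro b hb
      simp only [Finset.coe_filter, Finset.mem_range, Set.mem_setOf_eq, Set.mem_image,
        Finset.mem_coe, Finset.mem_filter, Finset.mem_univ, true_and] at hb ⊢
      exact ⟨⟨b, hb.1⟩, hb.2, rfl⟩
  rw [this]
  have : (Finset.range n).filter (fun t => t < k) = Finset.range k := by
    ext t
    simp only [Finset.mem_filter, Finset.mem_range]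
    omega
  rw [this, Finset.card_range]

lemma transpose_lam (j : Fin n) :
    (Finset.univ.filter fun i : Fin n => j.val < lam n α i.val).card = lam n α j.val := by
  have h1 : ∀ i : Fin n, (j.val < lam n α i.val ↔ i.val < K n α j.val) := by
    intro i
    rw [char_lam, char_K]
  have h2 : (Finset.univ.filter fun i : Fin n => j.val < lam n α i.val)
      = Finset.univ.filter fun i : Fin n => i.val < K n α j.val := by
    apply Finset.filter_congr
    intro i _
    exact h1 i
  rw [h2, card_fin_lt n _ (K_le n α j.val), K_eq_lam]

lemma diag_eq_cnt_n :
    (Finset.univ.filter fun i : Fin n => i.val < lam n α i.val).card = cnt n α n := by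
  have hlc : lcnt n α n = cnt n α n := by
    rw [lcnt_eq_cnt n α (by omega : n ≤ 2 * n)]
    congr 1
    omega
  have h1 : ∀ i : Fin n, (i.val < lam n α i.val ↔ i.val < cnt n α n) := by
    intro i
    rw [char_lam]
    constructor
    · rintro ⟨T, hT, hc, hl⟩
      rcases le_or_gt T n with h | h
      · exact lt_of_lt_of_le hc (cnt_mono n α h)
      · have := lcnt_eq_cnt n α hT
        rw [this] at hl
        exact lt_of_lt_of_le hl (cnt_mono n α (by omega))
    · intro h
      exact ⟨n, by omega, h, by rw [hlc]; exact h⟩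
  have h2 : (Finset.univ.filter fun i : Fin n => i.val < lam n α i.val)
      = Finset.univ.filter fun i : Fin n => i.val < cnt n α n := by
    apply Finset.filter_congr
    intro i _
    exact h1 i
  rw [h2, card_fin_lt n _ ?_]
  · exact cnt_le n α (by omega)

lemma stepD_lt {t : ℕ} (ht : t < n) :
    stepD n α t = α ⟨n - 1 - t, by omega⟩ := by
  unfold stepD aFun
  rw [if_pos ht, dif_pos (by omega : n - 1 - t < n)]

lemma stepD_alpha (i : Fin n) : stepD n α (n - 1 - i.val) = α i := by
  have hi := i.isLt
  rw [stepD_lt n α (by omega : n - 1 - i.val < n)]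
  congr 1
  exact Fin.ext (by simp; omega)

lemma cnt_n_eq_trues :
    cnt n α n = (Finset.univ.filter fun i => α i = true).card := by
  unfold cnt
  apply Finset.card_bij (fun a ha => (⟨n - 1 - a, by
    simp only [Finset.mem_filter, Finset.mem_range] at ha; omega⟩ : Fin n))
  · intro a ha
    simp only [Finset.mem_filter, Finset.mem_range] at ha
    simp only [Finset.mem_filter, Finset.mem_univ, true_and]
    rw [← stepD_lt n α ha.1]
    exact ha.2
  · intro a ha b hb hab
    simp only [Finset.mem_filter, Finset.mem_range] at ha hb
    have h2 : n - 1 - a = n - 1 - b := congrArg Fin.val hab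
    omega
  · intro b hb
    simp only [Finset.mem_filter, Finset.mem_univ, true_and] at hb
    have hbn := b.isLt
    refine ⟨n - 1 - b.val, ?_, ?_⟩
    · simp only [Finset.mem_filter, Finset.mem_range]
      refine ⟨by omega, ?_⟩
      rw [stepD_alpha n α b]
      exact hb
    · exact Fin.ext (by simp; omega)



lemma split_lefts {t : ℕ} (ht : t ≤ 2 * n) :
    ((Finset.range t).filter fun u => stepD n α u = false).card + lcnt n α t = n := by
  have hdisj : Disjoint ((Finset.range t).filter fun u => stepD n α u = false)
      ((Finset.range (2 * n)).filter fun u => t ≤ u ∧ stepD n α u = false) := by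
    rw [Finset.disjoint_left]
    intro a ha hb
    simp only [Finset.mem_filter, Finset.mem_range] at ha hb
    omega
  have hunion : ((Finset.range t).filter fun u => stepD n α u = false) ∪
      ((Finset.range (2 * n)).filter fun u => t ≤ u ∧ stepD n α u = false)
      = (Finset.range (2 * n)).filter fun u => stepD n α u = false := by
    ext a
    simp only [Finset.mem_union, Finset.mem_filter, Finset.mem_range]
    constructor
    · rintro (⟨h1, h2⟩ | ⟨h1, h2, h3⟩)
      · exact ⟨by omega, h2⟩
      · exact ⟨h1, h3⟩
    · rintro ⟨h1, h2⟩
      rcases lt_or_ge a t with h | h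
      · exact Or.inl ⟨h, h2⟩
      · exact Or.inr ⟨h1, h, h2⟩
  have := Finset.card_union_of_disjoint hdisj
  rw [hunion, lefts_total] at this
  unfold lcnt
  omega

lemma down_time {t : ℕ} (ht : t < 2 * n) (hd : stepD n α t = true) :
    t = (n - lam n α (cnt n α t)) + cnt n α t := by
  -- lam (cnt t) = lcnt (t+1)
  have hlam : lam n α (cnt n α t) = lcnt n α (t + 1) := by
    unfold lam lcnt
    congr 1
    apply Finset.filter_congr
    intro u hu
    simp only [Finset.mem_range] at hu
    constructor
    · rintro ⟨h1, h2⟩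
      refine ⟨?_, h1⟩
      by_contra hcon
      have hut : u ≤ t := by omega
      have := cnt_mono n α hut
      omega
    · rintro ⟨h1, h2⟩
      refine ⟨h2, ?_⟩
      have : cnt n α (t + 1) ≤ cnt n α u := cnt_mono n α h1
      have := cnt_succ_of_down n α hd
      omega
  -- lcnt t = lcnt (t+1) since stepD t = true
  have hlcnt : lcnt n α t = lcnt n α (t + 1) := by
    unfold lcnt
    congr 1
    apply Finset.filter_congr
    intro u hu
    constructor
    · rintro ⟨h1, h2⟩
      refine ⟨?_, h2⟩
      rcases Nat.eq_or_lt_of_le h1 with h | h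
      · rw [h] at hd; rw [hd] at h2; exact absurd h2 (by simp)
      · omega
    · rintro ⟨h1, h2⟩; exact ⟨by omega, h2⟩
  -- t = cnt t + #lefts before t
  have hsplit : cnt n α t + ((Finset.range t).filter fun u => stepD n α u = false).card = t := by
    have h2 := Finset.card_filter_add_card_filter_not
      (s := Finset.range t) (p := fun u => stepD n α u = true)
    simp only [Finset.card_range] at h2
    have h3 : ((Finset.range t).filter fun u => ¬ stepD n α u = true).card
        = ((Finset.range t).filter fun u => stepD n α u = false).card := by
      congr 1; apply Finset.filter_congr; intro x _; simp
    unfold cnt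
    omega
  have hsl := split_lefts n α (by omega : t ≤ 2 * n)
  have hle : lam n α (cnt n α t) ≤ n := by
    rw [hlam, ← hlcnt]
    omega
  rw [hlam, ← hlcnt]
  omega

lemma down_exists {r : ℕ} (hr : r < n) :
    ∃ t, t < 2 * n ∧ stepD n α t = true ∧ cnt n α t = r := by
  have hsurj := Finset.surj_on_of_inj_on_of_card_le
    (s := (Finset.range (2 * n)).filter fun u => stepD n α u = true)
    (t := Finset.range n)
    (fun a _ => cnt n α a)
    (fun a ha => by
      simp only [Finset.mem_filter, Finset.mem_range] at ha
      simp only [Finset.mem_range]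
      exact cnt_lt_of_down n α ha.1 ha.2)
    (fun a₁ a₂ ha₁ ha₂ heq => by
      simp only [Finset.mem_filter, Finset.mem_range] at ha₁ ha₂
      have heq' : cnt n α a₁ = cnt n α a₂ := heq
      by_contra hne
      rcases Nat.lt_or_ge a₁ a₂ with h | h
      · have h1 := cnt_succ_of_down n α ha₁.2
        have h2 : cnt n α (a₁ + 1) ≤ cnt n α a₂ := cnt_mono n α (by omega)
        omega
      · have h : a₂ < a₁ := by omega
        have h1 := cnt_succ_of_down n α ha₂.2
        have h2 : cnt n α (a₂ + 1) ≤ cnt n α a₁ := cnt_mono n α (by omega)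
        omega)
    (by
      rw [Finset.card_range]
      have := cnt_total n α
      unfold cnt at this
      omega)
  obtain ⟨a, ha, haeq⟩ := hsurj r (Finset.mem_range.mpr hr)
  simp only [Finset.mem_filter, Finset.mem_range] at ha
  exact ⟨a, ha.1, ha.2, haeq.symm⟩

lemma down_iff {t : ℕ} (ht : t < 2 * n) :
    stepD n α t = true ↔ ∃ r, r < n ∧ t = (n - lam n α r) + r := by
  constructor
  · intro hd
    exact ⟨cnt n α t, cnt_lt_of_down n α ht hd, down_time n α ht hd⟩
  · rintro ⟨r, hr, hteq⟩
    obtain ⟨t', ht', hd', hc'⟩ := down_exists n α hr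
    have := down_time n α ht' hd'
    rw [hc'] at this
    have : t = t' := by omega
    rw [this]
    exact hd'

lemma lam_inj {α' : Fin n → Bool}
    (h : ∀ r : Fin n, lam n α r.val = lam n α' r.val) : α = α' := by
  have hstep : ∀ t, t < 2 * n → stepD n α t = stepD n α' t := by
    intro t ht
    have h1 := down_iff n α ht
    have h2 := down_iff n α' ht
    have hiff : (∃ r, r < n ∧ t = (n - lam n α r) + r) ↔
        (∃ r, r < n ∧ t = (n - lam n α' r) + r) := by
      constructor
      · rintro ⟨r, hr, he⟩; exact ⟨r, hr, by rw [← h ⟨r, hr⟩]; exact he⟩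
      · rintro ⟨r, hr, he⟩; exact ⟨r, hr, by rw [h ⟨r, hr⟩]; exact he⟩
    have hiff2 : stepD n α t = true ↔ stepD n α' t = true := h1.trans (hiff.trans h2.symm)
    by_cases hb : stepD n α t = true
    · rw [hb, hiff2.mp hb]
    · have hb2 : ¬ stepD n α' t = true := fun hc => hb (hiff2.mpr hc)
      rw [Bool.not_eq_true] at hb hb2
      rw [hb, hb2]
  funext i
  have hi := i.isLt
  rw [← stepD_alpha n α i, ← stepD_alpha n α' i]
  exact hstep (n - 1 - i.val) (by omega)


end

section
variable {n : ℕ}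

/-- diagonal rows -/
def Dg (l : Fin n → ℕ) : Finset (Fin n) := Finset.univ.filter fun k : Fin n => k.val < l k

/-- hook set as a finset of `Fin n` -/
def Sset (l : Fin n → ℕ) (h2 : ∀ i, l i ≤ n) : Finset (Fin n) :=
  (Dg l).image fun k => (⟨l k - k.val - 1, by have := h2 k; have := k.isLt; omega⟩ : Fin n)

lemma dg_dc {l : Fin n → ℕ} (h1 : Antitone l) {j k : Fin n} (hjk : j.val ≤ k.val)
    (hk : k ∈ Dg l) : j ∈ Dg l := by
  simp only [Dg, Finset.mem_filter, Finset.mem_univ, true_and] at hk ⊢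
  have : l k ≤ l j := h1 (by exact_mod_cast hjk)
  omega

lemma mem_dg_iff {l : Fin n → ℕ} (h1 : Antitone l) (k : Fin n) :
    k ∈ Dg l ↔ k.val < (Dg l).card := by
  constructor
  · intro hk
    have hsub : (Finset.univ.filter fun j : Fin n => j.val < k.val + 1) ⊆ Dg l := by
      intro j hj
      simp only [Finset.mem_filter, Finset.mem_univ, true_and] at hj
      exact dg_dc h1 (by omega) hk
    have := Finset.card_le_card hsub
    rw [card_fin_lt n (k.val + 1) k.isLt] at this
    omega
  · intro hk
    by_contra hcon
    have hsub : Dg l ⊆ Finset.univ.filter fun j : Fin n => j.val < k.val := by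
      intro j hj
      simp only [Finset.mem_filter, Finset.mem_univ, true_and]
      by_contra hj2
      exact hcon (dg_dc h1 (by omega) hj)
    have := Finset.card_le_card hsub
    rw [card_fin_lt n k.val (by omega)] at this
    omega

lemma phi_injOn {l : Fin n → ℕ} (h1 : Antitone l) (h2 : ∀ i, l i ≤ n) :
    ∀ a ∈ Dg l, ∀ b ∈ Dg l,
      (⟨l a - a.val - 1, by have := h2 a; have := a.isLt; omega⟩ : Fin n) =
      (⟨l b - b.val - 1, by have := h2 b; have := b.isLt; omega⟩ : Fin n) → a = b := by
  intro a ha b hb hab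
  simp only [Dg, Finset.mem_filter, Finset.mem_univ, true_and] at ha hb
  have hv : l a - a.val - 1 = l b - b.val - 1 := congrArg Fin.val hab
  by_contra hne
  rcases Nat.lt_or_ge a.val b.val with h | h
  · have : l b ≤ l a := h1 (le_of_lt (by exact_mod_cast h))
    omega
  · have hba : b.val < a.val := by
      rcases Nat.eq_or_lt_of_le h with he | hlt
      · exact absurd (Fin.ext he.symm) hne
      · omega
    have : l a ≤ l b := h1 (le_of_lt (by exact_mod_cast hba))
    omega

lemma card_Sset {l : Fin n → ℕ} (h1 : Antitone l) (h2 : ∀ i, l i ≤ n) :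
    (Sset l h2).card = (Dg l).card := by
  unfold Sset
  exact Finset.card_image_of_injOn (fun a ha b hb => phi_injOn h1 h2 a ha b hb)

lemma hook_filter_card {l : Fin n → ℕ} (h1 : Antitone l) (h2 : ∀ i, l i ≤ n)
    {k : Fin n} (hk : k ∈ Dg l) :
    ((Sset l h2).filter fun i : Fin n => l k - k.val - 1 < i.val).card = k.val := by
  have hkd : k.val < l k := by
    simpa only [Dg, Finset.mem_filter, Finset.mem_univ, true_and] using hk
  have himg : (Sset l h2).filter (fun i : Fin n => l k - k.val - 1 < i.val)
      = ((Dg l).filter fun k' : Fin n => l k - k.val - 1 < l k' - k'.val - 1).image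
        fun k' => (⟨l k' - k'.val - 1, by have := h2 k'; have := k'.isLt; omega⟩ : Fin n) := by
    unfold Sset
    ext i
    simp only [Finset.mem_filter, Finset.mem_image]
    constructor
    · rintro ⟨⟨k', hk', hik'⟩, hlt⟩
      refine ⟨k', ⟨hk', ?_⟩, hik'⟩
      rw [← hik'] at hlt
      exact hlt
    · rintro ⟨k', ⟨hk', hlt⟩, hik'⟩
      refine ⟨⟨k', hk', hik'⟩, ?_⟩
      rw [← hik']
      exact hlt
  rw [himg]
  rw [Finset.card_image_of_injOn (fun a ha b hb =>
    phi_injOn h1 h2 a (Finset.mem_of_mem_filter a ha) b (Finset.mem_of_mem_filter b hb))]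
  have heq : (Dg l).filter (fun k' : Fin n => l k - k.val - 1 < l k' - k'.val - 1)
      = Finset.univ.filter fun k' : Fin n => k'.val < k.val := by
    ext k'
    simp only [Finset.mem_filter, Finset.mem_univ, true_and, Dg]
    constructor
    · rintro ⟨hk'd, hlt⟩
      by_contra hcon
      have hge : k.val ≤ k'.val := by omega
      have : l k' ≤ l k := h1 (by exact_mod_cast hge)
      omega
    · intro hlt
      have hk'd : k' ∈ Dg l := dg_dc h1 (le_of_lt hlt) hk
      simp only [Dg, Finset.mem_filter, Finset.mem_univ, true_and] at hk'd
      refine ⟨hk'd, ?_⟩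
      have : l k ≤ l k' := h1 (le_of_lt (by exact_mod_cast hlt))
      omega
  rw [heq, card_fin_lt n k.val (le_of_lt k.isLt)]

lemma diag_recover {l l' : Fin n → ℕ} (h1 : Antitone l) (h2 : ∀ i, l i ≤ n)
    (h1' : Antitone l') (h2' : ∀ i, l' i ≤ n)
    (hS : Sset l h2 = Sset l' h2') {k : Fin n} (hk : k ∈ Dg l) : l k = l' k := by
  have hkd : k.val < l k := by
    simpa only [Dg, Finset.mem_filter, Finset.mem_univ, true_and] using hk
  -- the hook value of k is in Sset l', so comes from some k''
  have hmem : (⟨l k - k.val - 1, by have := h2 k; have := k.isLt; omega⟩ : Fin n)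
      ∈ Sset l' h2' := by
    rw [← hS]
    unfold Sset
    exact Finset.mem_image_of_mem _ hk
  unfold Sset at hmem
  rw [Finset.mem_image] at hmem
  obtain ⟨k'', hk''d, hval⟩ := hmem
  have hk''dd : k''.val < l' k'' := by
    simpa only [Dg, Finset.mem_filter, Finset.mem_univ, true_and] using hk''d
  have hv : l' k'' - k''.val - 1 = l k - k.val - 1 := congrArg Fin.val hval
  -- k'' = k by counting
  have hc1 := hook_filter_card h1 h2 hk
  have hc2 := hook_filter_card h1' h2' hk''d
  rw [hS] at hc1
  rw [hv] at hc2
  rw [hc1] at hc2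
  have hkk : k'' = k := Fin.ext hc2.symm
  rw [hkk] at hv hk''dd
  omega

lemma offdiag_recover {l l' : Fin n → ℕ} (h1 : Antitone l) (h2 : ∀ i, l i ≤ n)
    (h3 : ∀ j : Fin n, (Finset.univ.filter fun i : Fin n => j.val < l i).card = l j)
    (h1' : Antitone l') (h2' : ∀ i, l' i ≤ n)
    (h3' : ∀ j : Fin n, (Finset.univ.filter fun i : Fin n => j.val < l' i).card = l' j)
    (hdiag : ∀ k : Fin n, l k = l' k ∨ (¬ k.val < l k ∧ ¬ k.val < l' k))
    {k : Fin n} (hk : ¬ k.val < l k) (hk' : ¬ k.val < l' k) : l k = l' k := by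
  rw [← h3 k, ← h3' k]
  congr 1
  apply Finset.filter_congr
  intro i _
  rcases hdiag i with he | ⟨hnd, hnd'⟩
  · rw [he]
  · constructor
    · intro hlt
      exfalso
      rcases Nat.lt_or_ge k.val i.val with h | h
      · have : l i ≤ l k := h1 (le_of_lt (by exact_mod_cast h))
        omega
      · omega
    · intro hlt
      exfalso
      rcases Nat.lt_or_ge k.val i.val with h | h
      · have : l' i ≤ l' k := h1' (le_of_lt (by exact_mod_cast h))
        omega
      · omega

lemma l_recover {l l' : Fin n → ℕ} (h1 : Antitone l) (h2 : ∀ i, l i ≤ n)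
    (h3 : ∀ j : Fin n, (Finset.univ.filter fun i : Fin n => j.val < l i).card = l j)
    (h1' : Antitone l') (h2' : ∀ i, l' i ≤ n)
    (h3' : ∀ j : Fin n, (Finset.univ.filter fun i : Fin n => j.val < l' i).card = l' j)
    (hS : Sset l h2 = Sset l' h2') : l = l' := by
  have hcard : (Dg l).card = (Dg l').card := by
    rw [← card_Sset h1 h2, ← card_Sset h1' h2', hS]
  have hdg : ∀ k : Fin n, k ∈ Dg l ↔ k ∈ Dg l' := by
    intro k
    rw [mem_dg_iff h1, mem_dg_iff h1', hcard]
  have hdiag : ∀ k : Fin n, l k = l' k ∨ (¬ k.val < l k ∧ ¬ k.val < l' k) := by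
    intro k
    by_cases hk : k ∈ Dg l
    · exact Or.inl (diag_recover h1 h2 h1' h2' hS hk)
    · refine Or.inr ⟨?_, ?_⟩
      · simpa only [Dg, Finset.mem_filter, Finset.mem_univ, true_and] using hk
      · have := (hdg k).not.mp hk
        simpa only [Dg, Finset.mem_filter, Finset.mem_univ, true_and] using this
  funext k
  rcases hdiag k with he | ⟨hnd, hnd'⟩
  · exact he
  · exact offdiag_recover h1 h2 h3 h1' h2' h3' hdiag hnd hnd'

end

section
variable (n : ℕ)

/-- the sequence associated to a diagram: `true` at the hook values `l k - k - 1`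
of the diagonal boxes -/
def bwdFun (l : Fin n → ℕ) : Fin n → Bool :=
  fun i => decide (∃ k : Fin n, k.val < l k ∧ l k = i.val + k.val + 1)

lemma bwd_filter (l : Fin n → ℕ) (h2 : ∀ i, l i ≤ n) :
    Finset.univ.filter (fun i => bwdFun n l i = true) = Sset l h2 := by
  ext i
  simp only [bwdFun, Finset.mem_filter, Finset.mem_univ, true_and, decide_eq_true_eq]
  rw [Sset, Finset.mem_image]
  constructor
  · rintro ⟨k, hk, hlk⟩
    refine ⟨k, ?_, ?_⟩
    · rw [Dg, Finset.mem_filter]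
      exact ⟨Finset.mem_univ k, hk⟩
    · exact Fin.ext (show l k - k.val - 1 = i.val by omega)
  · rintro ⟨k, hk, hik⟩
    rw [Dg, Finset.mem_filter] at hk
    have hv : l k - k.val - 1 = i.val := congrArg Fin.val hik
    exact ⟨k, hk.2, by omega⟩

end

/-- The set of `{+,-}`-sequences of length `n` with an even number of
minus signs is in bijection with the set of Young diagrams fitting inside an `n×n`
square that are symmetric with respect to the main diagonal and have an even number of
boxes on the main diagonal.  A sequence is encoded as a function `Fin n → Bool`
(`true` = minus); a Young diagram as a weakly decreasing sequence
`l : Fin n → ℕ` with `l i ≤ n`, symmetry meaning that the transpose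
`j ↦ #{i | l i > j}` equals `l`, and the diagonal boxes being the indices `i` with
`l i ≥ i + 1`. -/
theorem statement_2 (n : ℕ) :
    Nonempty
      ({α : Fin n → Bool // Even ((Finset.univ.filter fun i => α i = true).card)} ≃
       {l : Fin n → ℕ // Antitone l ∧ (∀ i, l i ≤ n) ∧
          (∀ j : Fin n, (Finset.univ.filter fun i : Fin n => j.val < l i).card = l j) ∧
          Even ((Finset.univ.filter fun i : Fin n => i.val < l i).card)}) := by
  classical
  set A := {α : Fin n → Bool // Even ((Finset.univ.filter fun i => α i = true).card)} with hA
  set B := {l : Fin n → ℕ // Antitone l ∧ (∀ i, l i ≤ n) ∧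
      (∀ j : Fin n, (Finset.univ.filter fun i : Fin n => j.val < l i).card = l j) ∧
      Even ((Finset.univ.filter fun i : Fin n => i.val < l i).card)} with hB
  have instB : Finite B := by
    apply Finite.of_injective (fun b : B => fun i : Fin n =>
      (⟨b.1 i, Nat.lt_succ_of_le (b.2.2.1 i)⟩ : Fin (n + 1)))
    intro a b h
    apply Subtype.ext
    funext i
    exact congrArg Fin.val (congrFun h i)
  -- forward map
  let ffun : A → B := fun a => ⟨fun i => lam n a.1 i.val, by
    constructor
    · intro i j hij
      exact lam_anti n a.1 (by exact_mod_cast hij)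
    refine ⟨fun i => lam_le n a.1 i.val, fun j => transpose_lam n a.1 j, ?_⟩
    rw [diag_eq_cnt_n n a.1, cnt_n_eq_trues n a.1]
    exact a.2⟩
  have hfinj : Function.Injective ffun := by
    intro a b h
    apply Subtype.ext
    apply lam_inj n
    intro r
    have h2 := congrFun (congrArg Subtype.val h) r
    exact h2
  -- backward map
  let gfun : B → A := fun b => ⟨bwdFun n b.1, by
    rw [bwd_filter n b.1 b.2.2.1, card_Sset b.2.1 b.2.2.1]
    exact b.2.2.2.2⟩
  have hginj : Function.Injective gfun := by
    intro a b h
    apply Subtype.ext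
    have hfun : bwdFun n a.1 = bwdFun n b.1 := congrArg Subtype.val h
    have hS : Sset a.1 a.2.2.1 = Sset b.1 b.2.2.1 := by
      rw [← bwd_filter n a.1 a.2.2.1, ← bwd_filter n b.1 b.2.2.1, hfun]
    exact l_recover a.2.1 a.2.2.1 a.2.2.2.1 b.2.1 b.2.2.1 b.2.2.2.1 hS
  refine Finite.card_eq.mp ?_
  exact le_antisymm (Nat.card_le_card_of_injective ffun hfinj)
    (Nat.card_le_card_of_injective gfun hginj)

end TypeD
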